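/- Let ν=1, 0<m₁<m₂, and Σ = {(x₁,x₂) ∈ ℝ² : x₁ ≥ 0, m₁x₁ ≤ x₂ ≤ m₂x₁}. Fix x₀=(x₀₁,x₀₂) ∈ Σ with x₀₁ > 0. Define y(s) = (1 − s/x₀₁)·x₀ for s ∈ [0,x₀₁] and α(s) = (−1, −x₀₂/(x₀₁(x₀₁−s))) for s ∈ [0,x₀₁). Then y ∈ W^{1,1}([0,x₀₁];ℝ²), α is measurable, the pair (y,α) satisfies the Grushin dynamics y₁'(s)=α₁(s), y₂'(s)=|y₁(s)|α₂(s) for a.e. s ∈ [0,x₀₁], y(s) ∈ Σ for all s ∈ [0,x₀₁], y(0)=x₀ and y(x₀₁)=(0,0). In particular, every point of Σ can be joined to the origin by an admissible trajectory. -/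

import Mathlib

open MeasureTheory Set Filter Topology

noncomputable section

/-- Squared Euclidean norm on ℝ². -/
def sq2 (v : ℝ × ℝ) : ℝ := v.1 ^ 2 + v.2 ^ 2

/-- Euclidean norm on ℝ². -/
def enorm2 (v : ℝ × ℝ) : ℝ := Real.sqrt (sq2 v)

/-- `(y, α)` is an admissible trajectory for the Grushin-type dynamics on `[t,T]`,
starting from `x` and constrained to the set `S`:  `y ∈ W^{1,1}`, `α` measurable,
`y₁' = α₁`, `y₂' = |y₁|^ν α₂` a.e. (in integral form), `y(t) = x`, `y(s) ∈ S`. -/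
def Admissible (ν : ℝ) (S : Set (ℝ × ℝ)) (t T : ℝ) (x : ℝ × ℝ)
    (y α : ℝ → ℝ × ℝ) : Prop :=
  Measurable α ∧
  IntervalIntegrable (fun τ => (α τ).1) volume t T ∧
  IntervalIntegrable (fun τ => |(y τ).1| ^ ν * (α τ).2) volume t T ∧
  (∀ s ∈ Icc t T, (y s).1 = x.1 + ∫ τ in t..s, (α τ).1) ∧
  (∀ s ∈ Icc t T, (y s).2 = x.2 + ∫ τ in t..s, |(y τ).1| ^ ν * (α τ).2) ∧
  (∀ s ∈ Icc t T, y s ∈ S)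

/-- `α ∈ L²(t,T)`. -/
def InL2 (α : ℝ → ℝ × ℝ) (t T : ℝ) : Prop :=
  IntervalIntegrable (fun τ => sq2 (α τ)) volume t T

/-- The cost `J_t(x;(y,α))`. -/
def cost (l : ℝ × ℝ → ℝ → ℝ) (g : ℝ × ℝ → ℝ) (t T : ℝ) (y α : ℝ → ℝ × ℝ) : ℝ :=
  (∫ τ in t..T, (sq2 (α τ) / 2 + l (y τ) τ)) + g (y T)

/-- `Γ_t[x]`: admissible trajectories from `(x,t)` with finite cost (`α ∈ L²`). -/
def Gamma (ν : ℝ) (S : Set (ℝ × ℝ)) (t T : ℝ) (x : ℝ × ℝ) :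
    Set ((ℝ → ℝ × ℝ) × (ℝ → ℝ × ℝ)) :=
  {p | Admissible ν S t T x p.1 p.2 ∧ InL2 p.2 t T}

/-- `Γ_t^{opt}[x]`: optimal trajectories. -/
def GammaOpt (ν : ℝ) (S : Set (ℝ × ℝ)) (l : ℝ × ℝ → ℝ → ℝ) (g : ℝ × ℝ → ℝ)
    (t T : ℝ) (x : ℝ × ℝ) : Set ((ℝ → ℝ × ℝ) × (ℝ → ℝ × ℝ)) :=
  {p | p ∈ Gamma ν S t T x ∧
    ∀ q ∈ Gamma ν S t T x, cost l g t T p.1 p.2 ≤ cost l g t T q.1 q.2}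

/-- The value function `u(x,t)`. -/
def valueFun (ν : ℝ) (S : Set (ℝ × ℝ)) (l : ℝ × ℝ → ℝ → ℝ) (g : ℝ × ℝ → ℝ)
    (T : ℝ) (x : ℝ × ℝ) (t : ℝ) : ℝ :=
  sInf ((fun p => cost l g t T p.1 p.2) '' Gamma ν S t T x)

/-- Closed graph property of `Γ_t^{opt}[x]`. -/
def ClosedGraphAt (ν : ℝ) (S : Set (ℝ × ℝ)) (l : ℝ × ℝ → ℝ → ℝ) (g : ℝ × ℝ → ℝ)
    (t T : ℝ) (x : ℝ × ℝ) : Prop :=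
  ∀ (xs : ℕ → ℝ × ℝ) (ys as : ℕ → ℝ → ℝ × ℝ) (y : ℝ → ℝ × ℝ),
    (∀ n, xs n ∈ S) → Tendsto xs atTop (𝓝 x) →
    (∀ n, (ys n, as n) ∈ GammaOpt ν S l g t T (xs n)) →
    TendstoUniformlyOn ys y atTop (Icc t T) →
    ∃ α, (y, α) ∈ GammaOpt ν S l g t T x

/-- Approximation property at `x` for initial time `t`. -/
def ApproxProperty (ν : ℝ) (S : Set (ℝ × ℝ)) (l : ℝ × ℝ → ℝ → ℝ) (g : ℝ × ℝ → ℝ)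
    (t T : ℝ) (x : ℝ × ℝ) : Prop :=
  ∀ y α, (y, α) ∈ Gamma ν S t T x →
    ∀ xs : ℕ → ℝ × ℝ, (∀ n, xs n ∈ S) → Tendsto xs atTop (𝓝 x) →
      ∃ ys as : ℕ → ℝ → ℝ × ℝ,
        (∀ n, (ys n, as n) ∈ Gamma ν S t T (xs n)) ∧
        TendstoUniformlyOn ys y atTop (Icc t T) ∧
        Tendsto (fun n => (∫ τ in t..T, sq2 (as n τ)) - ∫ τ in t..T, sq2 (α τ))
          atTop (𝓝 0) ∧
        Tendsto (fun n => cost l g t T (ys n) (as n)) atTop (𝓝 (cost l g t T y α))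

/-- The point `x` is unreachable: no admissible trajectory with finite cost,
starting from another point of `S`, reaches `x` at time `T`. -/
def Unreachable (ν : ℝ) (S : Set (ℝ × ℝ)) (T : ℝ) (x : ℝ × ℝ) : Prop :=
  ∀ xb ∈ S \ {x}, ¬ ∃ p ∈ Gamma ν S 0 T xb, p.1 T = x

/-- Reachability property of the dynamics at `x`. -/
def ReachProperty (ν : ℝ) (S : Set (ℝ × ℝ)) (T : ℝ) (x : ℝ × ℝ) : Prop :=
  ∀ xs : ℕ → ℝ × ℝ, (∀ n, xs n ∈ S) → Tendsto xs atTop (𝓝 x) →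
    ∃ (δ : ℕ → ℝ) (ys as : ℕ → ℝ → ℝ × ℝ),
      (∀ n, δ n ∈ Icc 0 T) ∧
      (∀ n, Admissible ν S 0 (δ n) (xs n) (ys n) (as n) ∧ InL2 (as n) 0 (δ n) ∧
        ys n (δ n) = x) ∧
      Tendsto (fun n => ∫ τ in (0:ℝ)..(δ n), sq2 (as n τ)) atTop (𝓝 0) ∧
      Tendsto δ atTop (𝓝 0)

/-- `x₁`-convexity of a subset of the plane. -/
def X1Convex (A : Set (ℝ × ℝ)) : Prop :=
  ∀ a b h : ℝ, (a, b) ∈ A → 0 < h → (a + h, b) ∈ A →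
    ∀ t ∈ Icc (0:ℝ) 1, (a + t * h, b) ∈ A

/-- Hypothesis (H1). -/
def HypH1 (S : Set (ℝ × ℝ)) : Prop :=
  ∀ x0 ∈ frontier S, x0.1 ≠ 0 →
    ∃ R > 0, X1Convex (S ∩ Metric.ball x0 R) ∧
      ((S ∩ Metric.ball x0 R ∩ {p | x0.2 < p.2}).Nonempty →
        ∃ C > 0,
          {p : ℝ × ℝ | p.1 = x0.1 ∧ p.2 ∈ Ioc x0.2 (x0.2 + R)} ⊆ S ∨
          {p : ℝ × ℝ | p.1 ∈ Ioc x0.1 (x0.1 + R) ∧ p.2 = x0.2 + C * (p.1 - x0.1)} ⊆ S ∨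
          {p : ℝ × ℝ | p.1 ∈ Ico (x0.1 - R) x0.1 ∧ p.2 = x0.2 + C * (x0.1 - p.1)} ⊆ S) ∧
      ((S ∩ Metric.ball x0 R ∩ {p | p.2 < x0.2}).Nonempty →
        ∃ C > 0,
          {p : ℝ × ℝ | p.1 = x0.1 ∧ p.2 ∈ Ico (x0.2 - R) x0.2} ⊆ S ∨
          {p : ℝ × ℝ | p.1 ∈ Ioc x0.1 (x0.1 + R) ∧ p.2 = x0.2 - C * (p.1 - x0.1)} ⊆ S ∨
          {p : ℝ × ℝ | p.1 ∈ Ico (x0.1 - R) x0.1 ∧ p.2 = x0.2 - C * (x0.1 - p.1)} ⊆ S)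

/-- Hypothesis (H2). -/
def HypH2 (ν : ℝ) (S : Set (ℝ × ℝ)) : Prop :=
  ∀ x0 ∈ frontier S, x0.1 = 0 →
    ∃ R > 0, X1Convex (S ∩ Metric.ball x0 R) ∧
      ((S ∩ Metric.ball x0 R ∩ {p | x0.2 < p.2}).Nonempty →
        ∃ C > 0,
          {p : ℝ × ℝ | p.1 ∈ Ioc 0 R ∧ p.2 = x0.2 + C * p.1 ^ (ν + 1)} ⊆ S ∨
          {p : ℝ × ℝ | p.1 ∈ Ico (-R) 0 ∧ p.2 = x0.2 + C * (-p.1) ^ (ν + 1)} ⊆ S) ∧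
      ((S ∩ Metric.ball x0 R ∩ {p | p.2 < x0.2}).Nonempty →
        ∃ C > 0,
          {p : ℝ × ℝ | p.1 ∈ Ioc 0 R ∧ p.2 = x0.2 - C * p.1 ^ (ν + 1)} ⊆ S ∨
          {p : ℝ × ℝ | p.1 ∈ Ico (-R) 0 ∧ p.2 = x0.2 - C * (-p.1) ^ (ν + 1)} ⊆ S)


lemma wedge_key (m₁ m₂ : ℝ) (hm₁ : 0 < m₁) (hm : m₁ < m₂)
    (x₀ : ℝ × ℝ)
    (hx₀ : x₀ ∈ {p : ℝ × ℝ | 0 ≤ p.1 ∧ m₁ * p.1 ≤ p.2 ∧ p.2 ≤ m₂ * p.1})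
    (hpos : 0 < x₀.1) :
    Admissible 1 {p : ℝ × ℝ | 0 ≤ p.1 ∧ m₁ * p.1 ≤ p.2 ∧ p.2 ≤ m₂ * p.1} 0 x₀.1 x₀
      (fun s => ((1 - s / x₀.1) * x₀.1, (1 - s / x₀.1) * x₀.2))
      (fun s => (-1, -x₀.2 / (x₀.1 * (x₀.1 - s)))) := by
  have hne : x₀.1 ≠ 0 := ne_of_gt hpos
  have hae : ∀ᵐ τ : ℝ ∂volume, τ ≠ x₀.1 := by
    refine ae_iff.mpr ?_
    have : {a : ℝ | ¬a ≠ x₀.1} = {x₀.1} := by ext a; simp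
    rw [this]; exact measure_singleton _
  have key : ∀ s : ℝ, 0 ≤ s → s ≤ x₀.1 →
      ∀ᵐ τ : ℝ ∂volume, τ ∈ Set.uIoc (0:ℝ) s →
        |(1 - τ / x₀.1) * x₀.1| ^ (1 : ℝ) * (-x₀.2 / (x₀.1 * (x₀.1 - τ)))
          = -x₀.2 / x₀.1 := by
    intro s h0 hs
    filter_upwards [hae] with τ hτne hτ
    rw [uIoc_of_le h0] at hτ
    have hlt : τ < x₀.1 := lt_of_le_of_ne (hτ.2.trans hs) hτne
    have hne2 : x₀.1 - τ ≠ 0 := sub_ne_zero.2 (ne_of_gt hlt)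
    have heq : (1 - τ / x₀.1) * x₀.1 = x₀.1 - τ := by field_simp
    rw [heq, Real.rpow_one, abs_of_nonneg (le_of_lt (sub_pos.2 hlt)),
      mul_comm, div_mul_eq_mul_div, div_eq_div_iff (mul_ne_zero hne hne2) hne]
    ring
  refine ⟨?_, ?_, ?_, ?_, ?_, ?_⟩
  · exact measurable_const.prodMk
      (measurable_const.div ((measurable_const.sub measurable_id).const_mul _))
  · exact intervalIntegrable_const
  · have hconst : IntervalIntegrable (fun _ : ℝ => -x₀.2 / x₀.1) volume 0 x₀.1 :=
      intervalIntegrable_const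
    refine hconst.congr_ae ?_
    exact ((ae_restrict_iff' measurableSet_uIoc).2
      ((key x₀.1 (le_of_lt hpos) le_rfl).mono (fun τ h hτ => (h hτ).symm)))
  · intro s hs
    rw [intervalIntegral.integral_const]
    field_simp
    ring
  · intro s hs
    have heq : (∫ τ in (0:ℝ)..s,
        |(1 - τ / x₀.1) * x₀.1| ^ (1 : ℝ) * (-x₀.2 / (x₀.1 * (x₀.1 - τ))))
          = s * (-x₀.2 / x₀.1) := by
      rw [intervalIntegral.integral_congr_ae (key s hs.1 hs.2),
        intervalIntegral.integral_const]
      simp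
    simp only
    rw [heq]
    field_simp
    ring
  · intro s hs
    have ht0 : 0 ≤ 1 - s / x₀.1 := by
      have : s / x₀.1 ≤ 1 := (div_le_one hpos).2 hs.2
      linarith
    refine ⟨mul_nonneg ht0 (le_of_lt hpos), ?_, ?_⟩
    · calc m₁ * ((1 - s / x₀.1) * x₀.1) = (1 - s / x₀.1) * (m₁ * x₀.1) := by ring
        _ ≤ (1 - s / x₀.1) * x₀.2 := mul_le_mul_of_nonneg_left hx₀.2.1 ht0
    · calc ((1 - s / x₀.1) * x₀.2) ≤ (1 - s / x₀.1) * (m₂ * x₀.1) :=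
          mul_le_mul_of_nonneg_left hx₀.2.2 ht0
        _ = m₂ * ((1 - s / x₀.1) * x₀.1) := by ring

/-- in the wedge `Σ = {x₁ ≥ 0, m₁x₁ ≤ x₂ ≤ m₂x₁}` (ν = 1), the explicit
straight-line trajectory joins any point `x₀` of `Σ` to the origin; in particular every
point of `Σ` can be joined to the origin by an admissible trajectory. -/
theorem wedge_explicit_trajectory
    (m₁ m₂ : ℝ) (hm₁ : 0 < m₁) (hm : m₁ < m₂)
    (x₀ : ℝ × ℝ)
    (hx₀ : x₀ ∈ {p : ℝ × ℝ | 0 ≤ p.1 ∧ m₁ * p.1 ≤ p.2 ∧ p.2 ≤ m₂ * p.1})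
    (hpos : 0 < x₀.1) :
    (Admissible 1 {p : ℝ × ℝ | 0 ≤ p.1 ∧ m₁ * p.1 ≤ p.2 ∧ p.2 ≤ m₂ * p.1} 0 x₀.1 x₀
        (fun s => ((1 - s / x₀.1) * x₀.1, (1 - s / x₀.1) * x₀.2))
        (fun s => (-1, -x₀.2 / (x₀.1 * (x₀.1 - s)))) ∧
      ((1 - (0 : ℝ) / x₀.1) * x₀.1, (1 - (0 : ℝ) / x₀.1) * x₀.2) = x₀ ∧
      ((1 - x₀.1 / x₀.1) * x₀.1, (1 - x₀.1 / x₀.1) * x₀.2) = ((0 : ℝ), (0 : ℝ))) ∧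
    ∀ z ∈ {p : ℝ × ℝ | 0 ≤ p.1 ∧ m₁ * p.1 ≤ p.2 ∧ p.2 ≤ m₂ * p.1},
      ∃ δ ≥ (0 : ℝ), ∃ y' α' : ℝ → ℝ × ℝ,
        Admissible 1 {p : ℝ × ℝ | 0 ≤ p.1 ∧ m₁ * p.1 ≤ p.2 ∧ p.2 ≤ m₂ * p.1} 0 δ z y' α' ∧
        y' δ = ((0 : ℝ), (0 : ℝ)) := by
  constructor
  · refine ⟨wedge_key m₁ m₂ hm₁ hm x₀ hx₀ hpos, ?_, ?_⟩
    · simp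
    · have hne : x₀.1 ≠ 0 := ne_of_gt hpos
      simp [div_self hne]
  · intro z hz
    rcases eq_or_lt_of_le hz.1 with h0 | h0
    · -- z = (0,0)
      have hz2 : z.2 = 0 := by
        have h1 := hz.2.1; have h2 := hz.2.2
        rw [← h0] at h1 h2; simp at h1 h2; linarith
      have hzeq : z = ((0:ℝ), (0:ℝ)) := Prod.ext h0.symm hz2
      refine ⟨0, le_rfl, fun _ => ((0:ℝ), (0:ℝ)), fun _ => ((0:ℝ), (0:ℝ)), ?_, rfl⟩
      refine ⟨measurable_const, intervalIntegrable_const, ?_, ?_, ?_, ?_⟩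
      · simpa using (intervalIntegrable_const (c := (0:ℝ)) :
          IntervalIntegrable _ volume 0 0)
      · intro s hs
        have : s = 0 := le_antisymm hs.2 hs.1
        subst this
        simp [hzeq, intervalIntegral.integral_same]
      · intro s hs
        have : s = 0 := le_antisymm hs.2 hs.1
        subst this
        simp [hzeq, intervalIntegral.integral_same]
      · intro s _
        exact ⟨le_rfl, by simp, by simp⟩
    · refine ⟨z.1, le_of_lt h0,
        (fun s => ((1 - s / z.1) * z.1, (1 - s / z.1) * z.2)),
        (fun s => (-1, -z.2 / (z.1 * (z.1 - s)))),
        wedge_key m₁ m₂ hm₁ hm z hz h0, ?_⟩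
      have hne : z.1 ≠ 0 := ne_of_gt h0
      simp [div_self hne]
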